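/- Let f = Σ_α a_α x^α converge at ξ ∈ k^d with μ = (v(ξ_1), …, v(ξ_d)) ∈ Conv(f), and suppose μ ∈ Reg(f), i.e. the infimum defining v(f, μ) is attained at a unique multi-index β. Then f(ξ) ≠ 0 and v(f(ξ)) = v(f, μ) = v(a_β) + Σ_i β_i v(ξ_i). -/

import Mathlib

open scoped NNReal


/-- If the power series `f = Σ a_α x^α` converges at `ξ ∈ k^d` (all `ξ i ≠ 0`) and the
infimum defining `v(f, μ)` at `μ = (v(ξ₁),…,v(ξ_d))` is attained at a unique
multi-index `β` (i.e. every other nonzero term is strictly dominated), then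
`f(ξ) ≠ 0` and `‖f(ξ)‖ = ‖a_β‖ ∏ᵢ ‖ξᵢ‖^{βᵢ}`, that is,
`v(f(ξ)) = v(a_β) + Σᵢ βᵢ v(ξᵢ)`. -/
theorem stmt_14 {k : Type*} [NontriviallyNormedField k] [CompleteSpace k]
    [IsUltrametricDist k] {d : ℕ}
    (a : (Fin d → ℕ) → k) (ξ : Fin d → k) (hξ : ∀ i, ξ i ≠ 0) (S : k)
    (hsum : HasSum (fun α : Fin d → ℕ => a α * ∏ i, ξ i ^ α i) S)
    (β : Fin d → ℕ) (hβ : a β ≠ 0)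
    (huniq : ∀ α : Fin d → ℕ, α ≠ β → a α ≠ 0 →
      ‖a α‖ * ∏ i, ‖ξ i‖ ^ α i < ‖a β‖ * ∏ i, ‖ξ i‖ ^ β i) :
    S ≠ 0 ∧ ‖S‖ = ‖a β‖ * ∏ i, ‖ξ i‖ ^ β i := by
  set t : (Fin d → ℕ) → k := fun α => a α * ∏ i, ξ i ^ α i with ht
  have hnt : ∀ α, ‖t α‖ = ‖a α‖ * ∏ i, ‖ξ i‖ ^ α i := by
    intro α
    simp [ht, norm_prod, norm_pow]
  have hc : 0 < ‖t β‖ := by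
    rw [hnt]
    exact mul_pos (norm_pos_iff.2 hβ)
      (Finset.prod_pos fun i _ => pow_pos (norm_pos_iff.2 (hξ i)) _)
  set g : (Fin d → ℕ) → k := fun α => if α = β then 0 else t α with hg
  have hglt : ∀ α, ‖g α‖ < ‖t β‖ := by
    intro α
    by_cases hαβ : α = β
    · simpa [hg, hαβ] using hc
    · simp only [hg, if_neg hαβ]
      by_cases ha : a α = 0
      · simpa [ht, ha] using hc
      · rw [hnt, hnt]
        exact huniq α hαβ ha
  -- HasSum g (S - t β)
  have hgsum : HasSum g (S - t β) := by
    have h1 : HasSum (fun α => if α = β then t β else 0) (t β) := hasSum_ite_eq β (t β)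
    have := hsum.sub h1
    have heq : g = fun b => t b - if b = β then t β else 0 := by
      funext α
      by_cases hαβ : α = β <;> simp [hg, hαβ]
    rw [heq]
    exact this
  -- finiteness of large terms
  have hsummable : Summable g := hgsum.summable
  have hfin : {α | ¬ ‖g α‖ < ‖t β‖ / 2}.Finite := by
    have h0 : Filter.Tendsto (fun α => ‖g α‖) Filter.cofinite (nhds 0) :=
      tendsto_zero_iff_norm_tendsto_zero.1 hsummable.tendsto_cofinite_zero
    have : ∀ᶠ α in Filter.cofinite, ‖g α‖ < ‖t β‖ / 2 :=
      h0.eventually_lt_const (by linarith)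
    simpa [Filter.eventually_cofinite] using this
  set C : ℝ := max (‖t β‖ / 2) (hfin.toFinset.sup (fun α => ‖g α‖₊) : ℝ≥0) with hC
  have hCc : C < ‖t β‖ := by
    apply max_lt (by linarith)
    by_cases hne : hfin.toFinset.Nonempty
    · obtain ⟨α₀, hα₀, hsup⟩ := hfin.toFinset.exists_mem_eq_sup hne (fun α => ‖g α‖₊)
      rw [hsup]
      simpa using hglt α₀
    · rw [Finset.not_nonempty_iff_eq_empty] at hne
      rw [hne]
      simpa using hc
  have hle : ∀ α, ‖g α‖ ≤ C := by
    intro α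
    by_cases hα : ‖g α‖ < ‖t β‖ / 2
    · exact le_trans hα.le (le_max_left _ _)
    · refine le_trans ?_ (le_max_right _ _)
      have : α ∈ hfin.toFinset := by simpa using hα
      have := Finset.le_sup (f := fun α => ‖g α‖₊) this
      exact_mod_cast this
  have hT : ‖S - t β‖ ≤ C := by
    rw [← hgsum.tsum_eq]
    exact IsUltrametricDist.norm_tsum_le_of_forall_le_of_nonneg
      (le_trans (norm_nonneg _) (hle β)) hle
  have hTlt : ‖S - t β‖ < ‖t β‖ := lt_of_le_of_lt hT hCc
  have hSeq : ‖S‖ = ‖t β‖ := by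
    have : S = t β + (S - t β) := by ring
    rw [this, IsUltrametricDist.norm_add_eq_max_of_norm_ne_norm (by linarith [hTlt] : ‖t β‖ ≠ ‖S - t β‖)]
    exact max_eq_left hTlt.le
  constructor
  · intro h
    rw [h] at hSeq
    simp at hSeq
    linarith [hSeq ▸ hc]
  · rw [hSeq, hnt]
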